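/- For every t ∈ ℕ, every i ∈ [N], and every a ∈ [m], and for every realization of the matrix A, the message-passing sequence satisfies the closed-form identity x^{(t)}_{i→a} = Σ_{λ=1}^{t} (−1)^{λ+1} Γ^{(t)}_λ Σ_{(b_1,…,b_λ) ∈ B_a^λ} Σ_{(j_1,…,j_λ) ∈ J_i^λ} y_{b_λ} · A_{b_1 j_1} · ∏_{ι=1}^{λ−1} A_{b_ι j_{ι+1}} A_{b_{ι+1} j_{ι+1}}, where J_i^λ := { (j_1,…,j_λ) ∈ [N]^λ : j_1 = i and j_α ≠ j_{α+1} for all α ∈ [λ−1] } and B_a^λ := { (b_1,…,b_λ) ∈ [m]^λ : b_1 ≠ a and b_α ≠ b_{α+1} for all α ∈ [λ−1] }. -/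
import Mathlib

open Finset

/-- The closed-form variance sequence `v̄^{(t)}` (`v̄^{(0)} = v⁰`). -/
noncomputable def vbar (δ β v0 : ℝ) : ℕ → ℝ
  | 0 => v0
  | t + 1 => v0 * (1 - δ) / (δ ^ (t + 1) * (1 - δ) + 2 * β * v0 * (1 - δ ^ (t + 1)))

/-- The step size `Δ^{(t)} = δ / (2β v̄^{(t)} + δ)`. -/
noncomputable def Dstep (δ β v0 : ℝ) (t : ℕ) : ℝ := δ / (2 * β * vbar δ β v0 t + δ)

/-- `Γ^{(t)}_λ = ∏_{τ=1}^{λ} Δ^{(t−τ)}` (truncated subtraction in `ℕ`). -/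
noncomputable def Gam (δ β v0 : ℝ) (t lam : ℕ) : ℝ :=
  ∏ τ ∈ Finset.Icc 1 lam, Dstep δ β v0 (t - τ)

/-- The message-passing sequence `x^{(t)}_{i→a}`. -/
noncomputable def mpSeq {m N : ℕ} (δ β v0 : ℝ) (A : Fin m → Fin N → ℝ) (y : Fin m → ℝ) :
    ℕ → Fin N → Fin m → ℝ
  | 0 => fun _ _ => 0
  | t + 1 => fun i a =>
      Dstep δ β v0 t * (∑ b ∈ Finset.univ.filter (fun b => b ≠ a), y b * A b i)
        - Dstep δ β v0 t * (∑ b ∈ Finset.univ.filter (fun b => b ≠ a),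
            ∑ j ∈ Finset.univ.filter (fun j => j ≠ i), A b i * A b j * mpSeq δ β v0 A y t j b)

/-- The index set `J_i^{l+1}`: tuples `j : Fin (l+1) → Fin N` with `j_1 = i` and
consecutive entries distinct. -/
def Jset {N : ℕ} (i : Fin N) (l : ℕ) : Finset (Fin (l + 1) → Fin N) :=
  Finset.univ.filter (fun j => j 0 = i ∧ ∀ α : Fin l, j α.castSucc ≠ j α.succ)

/-- The index set `B_a^{l+1}`: tuples `b : Fin (l+1) → Fin m` with `b_1 ≠ a` and
consecutive entries distinct. -/
def Bset {m : ℕ} (a : Fin m) (l : ℕ) : Finset (Fin (l + 1) → Fin m) :=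
  Finset.univ.filter (fun b => b 0 ≠ a ∧ ∀ α : Fin l, b α.castSucc ≠ b α.succ)

lemma Gam_range (δ β v0 : ℝ) (t lam : ℕ) :
    Gam δ β v0 t lam = ∏ k ∈ Finset.range lam, Dstep δ β v0 (t - (k + 1)) := by
  unfold Gam
  induction lam with
  | zero => simp
  | succ n ih => rw [Finset.prod_Icc_succ_top (by omega), ih, Finset.prod_range_succ]

lemma Gam_one (δ β v0 : ℝ) (t : ℕ) : Gam δ β v0 (t + 1) 1 = Dstep δ β v0 t := by
  simp [Gam_range]

lemma Gam_succ (δ β v0 : ℝ) (t l : ℕ) :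
    Gam δ β v0 (t + 1) (l + 1 + 1) = Dstep δ β v0 t * Gam δ β v0 t (l + 1) := by
  rw [Gam_range, Gam_range, Finset.prod_range_succ']
  simp only [Nat.add_sub_cancel,
    show ∀ k : ℕ, t + 1 - (k + 1 + 1) = t - (k + 1) from fun k => by omega]
  ring

lemma Bset_sum {m : ℕ} (a : Fin m) (l : ℕ) (f : (Fin (l + 2) → Fin m) → ℝ) :
    ∑ b ∈ Bset a (l + 1), f b
      = ∑ b0 ∈ Finset.univ.filter (fun b => b ≠ a), ∑ b' ∈ Bset b0 l, f (Fin.cons b0 b') := by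
  rw [Finset.sum_sigma']
  apply Finset.sum_nbij' (fun b => (⟨b 0, Fin.tail b⟩ : Σ _ : Fin m, Fin (l+1) → Fin m))
    (fun p => Fin.cons p.1 p.2)
  · rintro b hb
    simp only [Bset, Finset.mem_filter, Finset.mem_univ, true_and] at hb ⊢
    simp only [Finset.mem_sigma, Finset.mem_filter, Finset.mem_univ, true_and]
    obtain ⟨h1, h2⟩ := hb
    refine ⟨h1, ?_, fun α => ?_⟩
    · exact (h2 0).symm
    · have := h2 α.succ
      rwa [← Fin.succ_castSucc] at this
  · rintro ⟨b0, b'⟩ hp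
    simp only [Finset.mem_sigma, Finset.mem_filter, Finset.mem_univ, true_and, Bset] at hp
    simp only [Bset, Finset.mem_filter, Finset.mem_univ, true_and]
    obtain ⟨h1, h2, h3⟩ := hp
    refine ⟨by simpa using h1, fun α => ?_⟩
    induction α using Fin.cases with
    | zero => simpa using fun h => h2 h.symm
    | succ α => rw [← Fin.succ_castSucc]; simpa using h3 α
  · intro b _; exact Fin.cons_self_tail b
  · rintro ⟨b0, b'⟩ _; simp [Fin.tail_cons]
  · intro b _; rw [Fin.cons_self_tail]

lemma Jset_sum {N : ℕ} (i : Fin N) (l : ℕ) (f : (Fin (l + 2) → Fin N) → ℝ) :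
    ∑ j ∈ Jset i (l + 1), f j
      = ∑ j1 ∈ Finset.univ.filter (fun j => j ≠ i), ∑ j' ∈ Jset j1 l, f (Fin.cons i j') := by
  rw [Finset.sum_sigma']
  apply Finset.sum_nbij' (fun j => (⟨Fin.tail j 0, Fin.tail j⟩ : Σ _ : Fin N, Fin (l+1) → Fin N))
    (fun p => Fin.cons i p.2)
  · rintro j hj
    simp only [Jset, Finset.mem_filter, Finset.mem_univ, true_and] at hj
    simp only [Finset.mem_sigma, Finset.mem_filter, Finset.mem_univ, true_and, Jset]
    obtain ⟨h1, h2⟩ := hj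
    refine ⟨?_, fun α => ?_⟩
    · have := h2 0
      simp only [Fin.castSucc_zero, h1] at this
      exact fun h => this (by simpa [Fin.tail] using h.symm)
    · have := h2 α.succ
      rw [← Fin.succ_castSucc] at this
      simpa [Fin.tail] using this
  · rintro ⟨j1, j'⟩ hp
    simp only [Finset.mem_sigma, Finset.mem_filter, Finset.mem_univ, true_and, Jset] at hp
    simp only [Jset, Finset.mem_filter, Finset.mem_univ, true_and]
    obtain ⟨h1, h2, h3⟩ := hp
    refine ⟨rfl, fun α => ?_⟩
    induction α using Fin.cases with
    | zero => simpa [h2] using fun h => h1 h.symm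
    | succ α => rw [← Fin.succ_castSucc]; simpa using h3 α
  · intro j hj
    simp only [Jset, Finset.mem_filter, Finset.mem_univ, true_and] at hj
    conv_rhs => rw [← Fin.cons_self_tail j]
    rw [hj.1]
  · rintro ⟨j1, j'⟩ hp
    simp only [Finset.mem_sigma, Finset.mem_filter, Finset.mem_univ, true_and, Jset] at hp
    simp [Fin.tail_cons, hp.2.1]
  · intro j hj
    simp only [Jset, Finset.mem_filter, Finset.mem_univ, true_and] at hj
    conv_lhs => rw [← Fin.cons_self_tail j, hj.1]

lemma summand_cons {m N : ℕ} (A : Fin m → Fin N → ℝ) (y : Fin m → ℝ) (l : ℕ)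
    (b0 : Fin m) (b' : Fin (l + 1) → Fin m) (i : Fin N) (j' : Fin (l + 1) → Fin N) :
    y ((Fin.cons b0 b' : Fin (l+2) → Fin m) (Fin.last (l + 1)))
      * A ((Fin.cons b0 b' : Fin (l+2) → Fin m) 0) ((Fin.cons i j' : Fin (l+2) → Fin N) 0)
      * ∏ α : Fin (l + 1),
          (A ((Fin.cons b0 b' : Fin (l+2) → Fin m) α.castSucc)
              ((Fin.cons i j' : Fin (l+2) → Fin N) α.succ)
            * A ((Fin.cons b0 b' : Fin (l+2) → Fin m) α.succ)
              ((Fin.cons i j' : Fin (l+2) → Fin N) α.succ))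
    = A b0 i * A b0 (j' 0) *
      (y (b' (Fin.last l)) * A (b' 0) (j' 0) *
        ∏ α : Fin l, (A (b' α.castSucc) (j' α.succ) * A (b' α.succ) (j' α.succ))) := by
  rw [Fin.prod_univ_succ, ← Fin.succ_last]
  simp only [Fin.cons_succ, Fin.cons_zero, Fin.castSucc_zero, ← Fin.succ_castSucc]
  ring

lemma Jset_zero {N : ℕ} (i : Fin N) : Jset i 0 = {fun _ => i} := by
  ext j
  simp only [Jset, Finset.mem_filter, Finset.mem_univ, true_and, Finset.mem_singleton]
  constructor
  · rintro ⟨h, -⟩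
    funext x
    rw [Fin.fin_one_eq_zero x, h]
  · rintro rfl
    exact ⟨rfl, fun α => α.elim0⟩

lemma Bset_zero_sum {m : ℕ} (a : Fin m) (f : (Fin 1 → Fin m) → ℝ) :
    ∑ b ∈ Bset a 0, f b = ∑ b0 ∈ Finset.univ.filter (fun b => b ≠ a), f (fun _ => b0) := by
  apply Finset.sum_nbij' (fun b => b 0) (fun b0 => fun _ => b0)
  · intro b hb
    simp only [Bset, Finset.mem_filter, Finset.mem_univ, true_and] at hb ⊢
    exact hb.1
  · intro b0 hb0
    simp only [Finset.mem_filter, Finset.mem_univ, true_and] at hb0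
    simp only [Bset, Finset.mem_filter, Finset.mem_univ, true_and]
    exact ⟨hb0, fun α => α.elim0⟩
  · intro b _
    funext x
    rw [Fin.fin_one_eq_zero x]
  · intro b0 _
    rfl
  · intro b _
    congr 1
    funext x
    rw [Fin.fin_one_eq_zero x]

/-- key expansion step -/
lemma key_step {m N : ℕ} (A : Fin m → Fin N → ℝ) (y : Fin m → ℝ) (l : ℕ) (i : Fin N) (a : Fin m) :
    ∑ b ∈ Bset a (l + 1), ∑ j ∈ Jset i (l + 1),
        y (b (Fin.last (l + 1))) * A (b 0) (j 0) *
          ∏ α : Fin (l + 1), (A (b α.castSucc) (j α.succ) * A (b α.succ) (j α.succ))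
      = ∑ b0 ∈ Finset.univ.filter (fun b => b ≠ a), ∑ j1 ∈ Finset.univ.filter (fun j => j ≠ i),
          A b0 i * A b0 j1 *
            (∑ b' ∈ Bset b0 l, ∑ j' ∈ Jset j1 l,
              y (b' (Fin.last l)) * A (b' 0) (j' 0) *
                ∏ α : Fin l, (A (b' α.castSucc) (j' α.succ) * A (b' α.succ) (j' α.succ))) := by
  rw [Bset_sum]
  refine Finset.sum_congr rfl fun b0 _ => ?_
  rw [Finset.sum_comm, Jset_sum]
  refine Finset.sum_congr rfl fun j1 hj1 => ?_
  rw [Finset.sum_comm, Finset.mul_sum]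
  refine Finset.sum_congr rfl fun b' _ => ?_
  rw [Finset.mul_sum]
  refine Finset.sum_congr rfl fun j' hj' => ?_
  have hj0 : j' 0 = j1 := by
    simp only [Jset, Finset.mem_filter] at hj'
    exact hj'.2.1
  rw [summand_cons, hj0]

/-- closed-form path expansion of the message-passing iterates,
`x^{(t)}_{i→a} = Σ_{λ=1}^t (−1)^{λ+1} Γ^{(t)}_λ Σ_{B_a^λ} Σ_{J_i^λ}
 y_{b_λ} A_{b_1 j_1} ∏_{ι=1}^{λ−1} A_{b_ι j_{ι+1}} A_{b_{ι+1} j_{ι+1}}`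
(here `λ = l + 1` with `l` running over `0, …, t−1`). -/
theorem stmt3 {m N : ℕ} (δ β v0 : ℝ) (hδ : δ ∈ Set.Ioo (0:ℝ) 1) (hβ : 0 < β)
    (hv0 : 0 < v0) (A : Fin m → Fin N → ℝ) (y : Fin m → ℝ)
    (t : ℕ) (i : Fin N) (a : Fin m) :
    mpSeq δ β v0 A y t i a
      = ∑ l ∈ Finset.range t, (-1 : ℝ) ^ l * Gam δ β v0 t (l + 1) *
          ∑ b ∈ Bset a l, ∑ j ∈ Jset i l,
            y (b (Fin.last l)) * A (b 0) (j 0) *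
              ∏ α : Fin l, (A (b α.castSucc) (j α.succ) * A (b α.succ) (j α.succ)) := by
  induction t generalizing i a with
  | zero => simp [mpSeq]
  | succ t ih =>
    rw [Finset.sum_range_succ']
    have h0 : (-1 : ℝ) ^ 0 * Gam δ β v0 (t+1) (0 + 1) *
          ∑ b ∈ Bset a 0, ∑ j ∈ Jset i 0,
            y (b (Fin.last 0)) * A (b 0) (j 0) *
              ∏ α : Fin 0, (A (b α.castSucc) (j α.succ) * A (b α.succ) (j α.succ))
        = Dstep δ β v0 t * (∑ b ∈ Finset.univ.filter (fun b => b ≠ a), y b * A b i) := by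
      rw [pow_zero, one_mul, Gam_one]
      congr 1
      rw [Bset_zero_sum (f := fun b => ∑ j ∈ Jset i 0,
        y (b (Fin.last 0)) * A (b 0) (j 0) *
          ∏ α : Fin 0, (A (b α.castSucc) (j α.succ) * A (b α.succ) (j α.succ)))]
      refine Finset.sum_congr rfl fun b0 _ => ?_
      rw [Jset_zero, Finset.sum_singleton]
      simp
    have h1 : ∑ l ∈ Finset.range t,
          (-1 : ℝ) ^ (l+1) * Gam δ β v0 (t+1) (l + 1 + 1) *
            ∑ b ∈ Bset a (l+1), ∑ j ∈ Jset i (l+1),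
              y (b (Fin.last (l+1))) * A (b 0) (j 0) *
                ∏ α : Fin (l+1), (A (b α.castSucc) (j α.succ) * A (b α.succ) (j α.succ))
        = - (Dstep δ β v0 t * (∑ b ∈ Finset.univ.filter (fun b => b ≠ a),
            ∑ j ∈ Finset.univ.filter (fun j => j ≠ i), A b i * A b j * mpSeq δ β v0 A y t j b)) := by
      have step1 : ∀ l ∈ Finset.range t,
          (-1 : ℝ) ^ (l+1) * Gam δ β v0 (t+1) (l + 1 + 1) *
            ∑ b ∈ Bset a (l+1), ∑ j ∈ Jset i (l+1),
              y (b (Fin.last (l+1))) * A (b 0) (j 0) *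
                ∏ α : Fin (l+1), (A (b α.castSucc) (j α.succ) * A (b α.succ) (j α.succ))
          = ∑ b0 ∈ Finset.univ.filter (fun b => b ≠ a),
              ∑ j1 ∈ Finset.univ.filter (fun j => j ≠ i),
                - (Dstep δ β v0 t * (A b0 i * A b0 j1 *
                  ((-1:ℝ)^l * Gam δ β v0 t (l+1) *
                    ∑ b' ∈ Bset b0 l, ∑ j' ∈ Jset j1 l,
                      y (b' (Fin.last l)) * A (b' 0) (j' 0) *
                        ∏ α : Fin l, (A (b' α.castSucc) (j' α.succ) * A (b' α.succ) (j' α.succ))))) := by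
        intro l _
        rw [Gam_succ, key_step, Finset.mul_sum]
        refine Finset.sum_congr rfl fun b0 _ => ?_
        rw [Finset.mul_sum]
        refine Finset.sum_congr rfl fun j1 _ => ?_
        ring
      rw [Finset.sum_congr rfl step1, Finset.sum_comm]
      rw [Finset.mul_sum, ← Finset.sum_neg_distrib]
      refine Finset.sum_congr rfl fun b0 _ => ?_
      rw [Finset.sum_comm, Finset.mul_sum, ← Finset.sum_neg_distrib]
      refine Finset.sum_congr rfl fun j1 _ => ?_
      rw [ih, Finset.mul_sum, Finset.mul_sum, ← Finset.sum_neg_distrib]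
    show Dstep δ β v0 t * _ - Dstep δ β v0 t * _ = _
    rw [h0, h1]
    ring
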